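/- Let N ≥ 1, let w₁, …, w_N ≥ 0 and φ₁, …, φ_N ∈ ℝ, and define f(θ) = Σ_{k=1}^N max(w_k cos(θ − φ_k), 0). Then f attains its supremum over ℝ at some θ*, and every global maximizer θ* satisfies: either cos(θ* − φ_k) = 0 for some k with w_k > 0, or f(θ*)² = C² + D², where C = Σ_{k∈S} w_k cos φ_k and D = Σ_{k∈S} w_k sin φ_k with S = {k : cos(θ* − φ_k) ≥ 0}. -/

import Mathlib

open Finset

private lemma amp_le (C D θ : ℝ) :
    C * Real.cos θ + D * Real.sin θ ≤ Real.sqrt (C ^ 2 + D ^ 2) := by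
  have h1 := Real.sin_sq_add_cos_sq θ
  have h2 : Real.sqrt (C ^ 2 + D ^ 2) ^ 2 = C ^ 2 + D ^ 2 :=
    Real.sq_sqrt (by positivity)
  have h3 := Real.sqrt_nonneg (C ^ 2 + D ^ 2)
  nlinarith [sq_nonneg (C * Real.sin θ - D * Real.cos θ),
    sq_nonneg (C * Real.cos θ + D * Real.sin θ - Real.sqrt (C ^ 2 + D ^ 2)),
    sq_nonneg (C * Real.cos θ + D * Real.sin θ + Real.sqrt (C ^ 2 + D ^ 2))]

private lemma amp_exists (C D : ℝ) :
    ∃ θ : ℝ, C * Real.cos θ + D * Real.sin θ = Real.sqrt (C ^ 2 + D ^ 2) := by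
  by_cases h : C = 0 ∧ D = 0
  · exact ⟨0, by simp [h.1, h.2]⟩
  · set z : ℂ := ⟨C, D⟩ with hz
    have hz0 : z ≠ 0 := by
      intro hzz
      rw [Complex.ext_iff] at hzz
      exact h ⟨hzz.1, hzz.2⟩
    have habs : ‖z‖ = Real.sqrt (C ^ 2 + D ^ 2) := by
      rw [Complex.norm_def, Complex.normSq_apply]; ring_nf; rfl
    have hc : Real.cos z.arg = C / ‖z‖ := by
      rw [Complex.cos_arg hz0]
    have hs : Real.sin z.arg = D / ‖z‖ := by
      rw [Complex.sin_arg]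
    refine ⟨z.arg, ?_⟩
    have habs0 : ‖z‖ ≠ 0 := by simpa using hz0
    rw [hc, hs, ← habs]
    have h2 : C ^ 2 + D ^ 2 = ‖z‖ ^ 2 := by
      rw [habs, Real.sq_sqrt (by positivity)]
    field_simp
    nlinarith [h2]

/-- The EOHS objective `f(θ) = Σ_k max(w_k cos(θ − φ_k), 0)` attains its
supremum over `ℝ`, and every global maximizer `θ*` satisfies: either `cos(θ* − φ_k) = 0` for
some `k` with `w_k > 0`, or `f(θ*)² = C² + D²`, where `C, D` are the cosine/sine moment sums
over the active set `S = {k : cos(θ* − φ_k) ≥ 0}`. -/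
theorem stmt_16 {N : ℕ} (hN : 1 ≤ N) (w φ : Fin N → ℝ) (hw : ∀ k, 0 ≤ w k)
    (f : ℝ → ℝ) (hf : f = fun θ => ∑ k, max (w k * Real.cos (θ - φ k)) 0) :
    (∃ θs : ℝ, ∀ θ : ℝ, f θ ≤ f θs) ∧
    (∀ θs : ℝ, (∀ θ : ℝ, f θ ≤ f θs) →
      (∃ k, 0 < w k ∧ Real.cos (θs - φ k) = 0) ∨
      f θs ^ 2
        = (∑ k ∈ univ.filter (fun k => 0 ≤ Real.cos (θs - φ k)), w k * Real.cos (φ k)) ^ 2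
          + (∑ k ∈ univ.filter (fun k => 0 ≤ Real.cos (θs - φ k)), w k * Real.sin (φ k)) ^ 2) := by
  subst hf
  have hcont : Continuous fun θ : ℝ => ∑ k, max (w k * Real.cos (θ - φ k)) 0 := by
    apply continuous_finset_sum
    intro k _
    exact (continuous_const.mul (Real.continuous_cos.comp
      (continuous_id.sub continuous_const))).max continuous_const
  have hper : Function.Periodic
      (fun θ : ℝ => ∑ k, max (w k * Real.cos (θ - φ k)) 0) (2 * Real.pi) := by
    intro θ
    simp only
    refine Finset.sum_congr rfl fun k _ => ?_
    rw [show θ + 2 * Real.pi - φ k = θ - φ k + 2 * Real.pi by ring, Real.cos_add_two_pi]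
  constructor
  · obtain ⟨θs, _, hmax⟩ := isCompact_Icc.exists_isMaxOn
      (Set.nonempty_Icc.2 (by positivity : (0:ℝ) ≤ 2 * Real.pi)) hcont.continuousOn
    refine ⟨θs, fun θ => ?_⟩
    obtain ⟨y, hy, hfy⟩ := hper.exists_mem_Ico₀ (by positivity) θ
    exact hfy.trans_le (hmax (Set.Ico_subset_Icc_self hy))
  · intro θs hmax
    right
    set S := univ.filter (fun k => 0 ≤ Real.cos (θs - φ k)) with hS
    set C := ∑ k ∈ S, w k * Real.cos (φ k) with hC
    set D := ∑ k ∈ S, w k * Real.sin (φ k) with hD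
    -- the linear form equals the S-restricted sum
    have hlin : ∀ θ : ℝ, ∑ k ∈ S, w k * Real.cos (θ - φ k)
        = C * Real.cos θ + D * Real.sin θ := by
      intro θ
      rw [hC, hD, Finset.sum_mul, Finset.sum_mul, ← Finset.sum_add_distrib]
      refine Finset.sum_congr rfl fun k _ => ?_
      rw [Real.cos_sub]; ring
    -- f θs equals the linear form at θs
    have hfθs : ∑ k, max (w k * Real.cos (θs - φ k)) 0
        = C * Real.cos θs + D * Real.sin θs := by
      rw [← hlin θs, ← Finset.sum_filter_add_sum_filter_not univ
        (fun k => 0 ≤ Real.cos (θs - φ k))]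
      have h1 : ∑ k ∈ S, max (w k * Real.cos (θs - φ k)) 0
          = ∑ k ∈ S, w k * Real.cos (θs - φ k) := by
        refine Finset.sum_congr rfl fun k hk => ?_
        rw [hS, Finset.mem_filter] at hk
        exact max_eq_left (mul_nonneg (hw k) hk.2)
      have h2 : ∑ k ∈ univ.filter (fun k => ¬ 0 ≤ Real.cos (θs - φ k)),
          max (w k * Real.cos (θs - φ k)) 0 = 0 := by
        refine Finset.sum_eq_zero fun k hk => ?_
        rw [Finset.mem_filter] at hk
        exact max_eq_right (mul_nonpos_of_nonneg_of_nonpos (hw k) (le_of_not_ge hk.2))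
      rw [h1, h2, add_zero]
    -- the linear form is dominated by f everywhere
    have hdom : ∀ θ : ℝ, C * Real.cos θ + D * Real.sin θ
        ≤ ∑ k, max (w k * Real.cos (θ - φ k)) 0 := by
      intro θ
      rw [← hlin θ]
      calc ∑ k ∈ S, w k * Real.cos (θ - φ k)
          ≤ ∑ k ∈ S, max (w k * Real.cos (θ - φ k)) 0 :=
            Finset.sum_le_sum fun k _ => le_max_left _ _
        _ ≤ ∑ k, max (w k * Real.cos (θ - φ k)) 0 :=
            Finset.sum_le_sum_of_subset_of_nonneg (Finset.filter_subset _ _)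
              (fun k _ _ => le_max_right _ _)
    obtain ⟨θ0, hθ0⟩ := amp_exists C D
    have hge : Real.sqrt (C ^ 2 + D ^ 2) ≤ ∑ k, max (w k * Real.cos (θs - φ k)) 0 :=
      hθ0 ▸ (hdom θ0).trans (hmax θ0)
    have hle : ∑ k, max (w k * Real.cos (θs - φ k)) 0 ≤ Real.sqrt (C ^ 2 + D ^ 2) := by
      rw [hfθs]; exact amp_le C D θs
    have heq : ∑ k, max (w k * Real.cos (θs - φ k)) 0 = Real.sqrt (C ^ 2 + D ^ 2) :=
      le_antisymm hle hge
    simp only at heq ⊢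
    rw [heq, Real.sq_sqrt (by positivity)]
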